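/- Let n be odd and a_1,…,a_n positive reals. There exist positive reals t_1,…,t_n with a_j = t_j + t_{j+1} for all j (indices mod n) if and only if for every cyclic rotation, the alternating sum a_j − a_{j+1} + a_{j+2} − ⋯ + a_{j−1} is positive. -/

import Mathlib

open Fin.NatCast Fin.CommRing in
lemma key_alt (n : ℕ) [NeZero n] (hn : Odd n) (f : Fin n → ℝ) (j : Fin n) :
    (∑ i : Fin n, (-1 : ℝ) ^ (i : ℕ) * f (j + i)) +
      ∑ i : Fin n, (-1 : ℝ) ^ (i : ℕ) * f (j + 1 + i) = 2 * f j := by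
  have hrange : ∀ c : Fin n, (∑ i : Fin n, (-1 : ℝ) ^ (i : ℕ) * f (c + i)) =
      ∑ k ∈ Finset.range n, (-1 : ℝ) ^ k * f (c + (k : Fin n)) := by
    intro c
    rw [← Fin.sum_univ_eq_sum_range (fun k => (-1 : ℝ) ^ k * f (c + (k : Fin n)))]
    simp [Fin.cast_val_eq_self]
  obtain ⟨m, rfl⟩ : ∃ m, n = m + 1 := ⟨n - 1, (Nat.succ_pred_eq_of_pos (NeZero.pos n)).symm⟩
  rw [hrange j, hrange (j + 1)]
  rw [Finset.sum_range_succ' (fun k => (-1 : ℝ) ^ k * f (j + (k : Fin (m + 1)))) m]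
  rw [Finset.sum_range_succ (fun k => (-1 : ℝ) ^ k * f (j + 1 + (k : Fin (m + 1)))) m]
  have hm : Even m := by
    rcases hn with ⟨p, hp⟩; exact ⟨p, by omega⟩
  have hlast : j + 1 + (m : Fin (m + 1)) = j := by
    have : (1 : Fin (m + 1)) + (m : Fin (m + 1)) = 0 := by
      have : ((1 + m : ℕ) : Fin (m + 1)) = 0 := by
        simp [Fin.natCast_self, Nat.add_comm]
      simpa using this
    rw [add_assoc, this, add_zero]
  have hshift : ∀ k ∈ Finset.range m,
      (-1 : ℝ) ^ (k + 1) * f (j + ((k + 1 : ℕ) : Fin (m + 1)))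
        = -((-1 : ℝ) ^ k * f (j + 1 + (k : Fin (m + 1)))) := by
    intro k _
    have : j + ((k + 1 : ℕ) : Fin (m + 1)) = j + 1 + (k : Fin (m + 1)) := by
      push_cast
      ring
    rw [this, pow_succ]
    ring
  rw [Finset.sum_congr rfl hshift, hlast, hm.neg_one_pow]
  simp
  ring

theorem stmt_4 (n : ℕ) [NeZero n] (hn : Odd n) (a : Fin n → ℝ) (ha : ∀ j, 0 < a j) :
    (∃ t : Fin n → ℝ, (∀ j, 0 < t j) ∧ ∀ j : Fin n, a j = t j + t (j + 1)) ↔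
      ∀ j : Fin n, 0 < ∑ i : Fin n, (-1 : ℝ) ^ (i : ℕ) * a (j + i) := by
  constructor
  · rintro ⟨t, ht, hat⟩ j
    have hsum : (∑ i : Fin n, (-1 : ℝ) ^ (i : ℕ) * a (j + i)) = 2 * t j := by
      have : ∀ i : Fin n, a (j + i) = t (j + i) + t (j + 1 + i) := by
        intro i
        rw [hat (j + i)]
        congr 1
        rw [add_right_comm]
      calc (∑ i : Fin n, (-1 : ℝ) ^ (i : ℕ) * a (j + i))
          = (∑ i : Fin n, (-1 : ℝ) ^ (i : ℕ) * t (j + i)) +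
            ∑ i : Fin n, (-1 : ℝ) ^ (i : ℕ) * t (j + 1 + i) := by
            rw [← Finset.sum_add_distrib]
            exact Finset.sum_congr rfl fun i _ => by rw [this i]; ring
        _ = 2 * t j := key_alt n hn t j
    rw [hsum]
    linarith [ht j]
  · intro hS
    refine ⟨fun j => (∑ i : Fin n, (-1 : ℝ) ^ (i : ℕ) * a (j + i)) / 2, fun j => div_pos (hS j) two_pos,
      fun j => ?_⟩
    have := key_alt n hn a j
    field_simp
    linarith
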